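/- Under the hypotheses of the context (the absorption probabilities h_0,…,h_{k+1} of the Markov chain M_k^1), it holds that h_0 ≥ 1 − (k+2)/(n(r−1)). -/

import Mathlib

set_option maxHeartbeats 1000000 in
/-- Lower bound `h_0 ≥ 1 - (k+2)/(n(r-1))` for the absorption probabilities of the
Markov chain `M_k^1`. -/
theorem h0_lower_bound (n k : ℕ) (hn : 1 ≤ n) (hk1 : 1 ≤ k) (hk2 : k ≤ n - 1)
    (r : ℝ) (hr : 1 < r) (h : ℕ → ℝ)
    (hbound : ∀ i ≤ k + 1, 0 ≤ h i ∧ h i ≤ 1)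
    (htop : h (k + 1) = 1)
    (hzero : h 0 = (r * n / (r * n + 1)) * h 1)
    (hrec : ∀ i, 1 ≤ i → i ≤ k →
      h i = (r * (((k : ℝ) - i) * n + i * ((n : ℝ) - i)) / n * h (i + 1)
              + ((i : ℝ) * ((n : ℝ) - i) / n) * h (i - 1))
        / (r * (((k : ℝ) - i) * n + i * ((n : ℝ) - i)) / n
              + (i : ℝ) * ((n : ℝ) - i) / n + ((k : ℝ) - i) / n)) :
    h 0 ≥ 1 - ((k : ℝ) + 2) / ((n : ℝ) * (r - 1)) := by
  have hn' : (1:ℝ) ≤ n := by exact_mod_cast hn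
  have hnpos : (0:ℝ) < n := by linarith
  have hr1 : (0:ℝ) < r - 1 := by linarith
  have hcpos : (0:ℝ) < n * (r - 1) := by positivity
  have hrn : (0:ℝ) < r * n + 1 := by nlinarith
  have hkn : k < n := by omega
  set c : ℝ := 1 / (n * (r - 1)) with hc_def
  clear_value c
  have hc0 : 0 < c := by rw [hc_def]; positivity
  have key : ∀ i, i ≤ k → 0 ≤ h (i+1) - h i ∧ h (i+1) - h i ≤ c := by
    intro i
    induction i with
    | zero =>
      intro _
      have h1b := hbound 1 (by omega)
      have hd : h 1 - h 0 = h 1 / (r*n+1) := by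
        rw [hzero]; field_simp; ring
      constructor
      · rw [hd]; exact div_nonneg h1b.1 hrn.le
      · rw [hd, hc_def, div_le_div_iff₀ hrn hcpos]
        nlinarith [h1b.1, h1b.2]
    | succ j ih =>
      intro hjk
      obtain ⟨ih0, ih1⟩ := ih (by omega)
      have heq := hrec (j+1) (by omega) hjk
      -- cast facts
      have hcast : ((j+1 : ℕ) : ℝ) = (j:ℝ) + 1 := by push_cast; ring
      have hKJ : (0:ℝ) ≤ (k:ℝ) - ((j:ℝ)+1) := by
        have : (j:ℝ) + 1 ≤ (k:ℝ) := by exact_mod_cast hjk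
        linarith
      have hNJ : (1:ℝ) ≤ (n:ℝ) - ((j:ℝ)+1) := by
        have : (j:ℝ) + 1 + 1 ≤ (n:ℝ) := by
          have : j + 1 + 1 ≤ n := by omega
          exact_mod_cast this
        linarith
      have hJ : (1:ℝ) ≤ (j:ℝ) + 1 := by
        have := Nat.cast_nonneg (α := ℝ) j; linarith
      set J : ℝ := (j:ℝ) + 1 with hJdef
      set KJ : ℝ := (k:ℝ) - J with hKJdef
      set NJ : ℝ := (n:ℝ) - J with hNJdef
      set A : ℝ := r * (KJ * n + J * NJ) / n with hAdef
      set B : ℝ := J * NJ / n with hBdef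
      set C : ℝ := KJ / n with hCdef
      clear_value J KJ NJ A B C
      have hBpos : 0 < B := by rw [hBdef]; positivity
      have hCnn : 0 ≤ C := by rw [hCdef]; positivity
      have hAeq : A = r * n * C + r * B := by
        rw [hAdef, hBdef, hCdef]; field_simp
      have hApos : 0 < A := by
        rw [hAeq]; nlinarith
      have heq' : h (j+1) = (A * h (j+2) + B * h j) / (A + B + C) := by
        rw [heq]
        simp only [hcast, Nat.add_sub_cancel]
        rw [hAdef, hBdef, hCdef, hKJdef, hNJdef]
      have hDpos : 0 < A + B + C := by linarith
      have heq2 : h (j+1) * (A + B + C) = A * h (j+2) + B * h j := by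
        rw [heq', div_mul_cancel₀ _ (ne_of_gt hDpos)]
      have hlin : A * (h (j+2) - h (j+1)) = B * (h (j+1) - h j) + C * h (j+1) := by
        linarith [heq2]
      have hjb := hbound (j+1) (by omega)
      constructor
      · have hrhs : 0 ≤ B * (h (j+1) - h j) + C * h (j+1) := by
          have := mul_nonneg hBpos.le ih0
          have := mul_nonneg hCnn hjb.1
          linarith
        have h0' : 0 ≤ A * (h (j+2) - h (j+1)) := by rw [hlin]; exact hrhs
        exact le_of_mul_le_mul_left (by linarith : A * 0 ≤ A * (h (j+2) - h (j+1))) hApos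
      · -- A * (c - d) ≥ 0
        have hcc : (n * (r-1)) * c = 1 := by
          rw [hc_def]; exact mul_one_div_cancel (ne_of_gt hcpos)
        have h1 : A * (h (j+2) - h (j+1)) ≤ B * c + C := by
          have t1 : B * (h (j+1) - h j) ≤ B * c := by
            exact mul_le_mul_of_nonneg_left ih1 hBpos.le
          have t2 : C * h (j+1) ≤ C := by
            exact mul_le_of_le_one_right hCnn hjb.2
          linarith [hlin]
        have h2 : B * c + C ≤ A * c := by
          rw [hAeq]
          have t3 : B * c ≤ r * B * c := by nlinarith
          have t4 : C ≤ r * n * C * c := by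
            have he : r * n * C * c = r * C * ((n * (r-1)) * c) / (r - 1) := by
              field_simp
            rw [he, hcc]
            rw [le_div_iff₀ hr1]
            nlinarith [hCnn]
          linarith
        have := h1.trans h2
        exact le_of_mul_le_mul_left (by linarith) hApos
  -- telescoping sum
  have tel : ∑ i ∈ Finset.range (k+1), (h (i+1) - h i) = h (k+1) - h 0 :=
    Finset.sum_range_sub h (k+1)
  have hsum : ∑ i ∈ Finset.range (k+1), (h (i+1) - h i) ≤ ((k:ℝ)+1) * c := by
    calc ∑ i ∈ Finset.range (k+1), (h (i+1) - h i)
        ≤ ∑ _i ∈ Finset.range (k+1), c :=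
          Finset.sum_le_sum (fun i hi => (key i (by
            have := Finset.mem_range.mp hi; omega)).2)
      _ = ((k:ℝ)+1) * c := by
          rw [Finset.sum_const, Finset.card_range, nsmul_eq_mul]
          push_cast; ring
  rw [tel, htop] at hsum
  have hgoal : ((k:ℝ)+2) / ((n:ℝ)*(r-1)) = ((k:ℝ)+2) * c := by
    rw [hc_def]; ring
  rw [ge_iff_le, hgoal]
  linarith
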